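/- If G is a 2-connected graph whose vertex set can be partitioned into the vertex sets of two cable paths, then G can be transformed into a cactus by contracting at most 3 edges. -/

import Mathlib

open SimpleGraph

universe u v

/-- A cactus: a connected graph in which every edge lies on at most one cycle
(any two cycles through a common edge have the same edge set). -/
def IsCactus {V : Type u} (G : SimpleGraph V) : Prop :=
  G.Connected ∧ ∀ (e : Sym2 V) (a b : V) (c₁ : G.Walk a a) (c₂ : G.Walk b b),
    c₁.IsCycle → c₂.IsCycle → e ∈ c₁.edges → e ∈ c₂.edges →
    {e' | e' ∈ c₁.edges} = {e' | e' ∈ c₂.edges}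

/-- The graph `G/F` obtained by contracting the edges of `F`: its vertices are the
connected components of the subgraph spanned by the edges of `F` that lie in `G`. -/
def contract {V : Type u} (G : SimpleGraph V) (F : Set (Sym2 V)) :
    SimpleGraph (SimpleGraph.fromEdgeSet F ⊓ G).ConnectedComponent where
  Adj a b := a ≠ b ∧ ∃ x y : V, G.Adj x y ∧
      (SimpleGraph.fromEdgeSet F ⊓ G).connectedComponentMk x = a ∧
      (SimpleGraph.fromEdgeSet F ⊓ G).connectedComponentMk y = b
  symm := by
    refine ⟨?_⟩
    rintro a b ⟨hne, x, y, hadj, hx, hy⟩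
    exact ⟨hne.symm, y, x, hadj.symm, hy, hx⟩
  loopless := by
    refine ⟨?_⟩
    rintro a ⟨hne, -⟩
    exact hne rfl

/-- A cut-vertex of `G`: removing it disconnects the graph. -/
def IsCutVertex {V : Type u} (G : SimpleGraph V) (x : V) : Prop :=
  ¬ (G.induce ({x}ᶜ : Set V)).Connected

/-- 2-connected: connected, at least 3 vertices, no cut-vertex. -/
def TwoConnected {V : Type u} (G : SimpleGraph V) : Prop :=
  G.Connected ∧ 3 ≤ Nat.card V ∧ ∀ x : V, (G.induce ({x}ᶜ : Set V)).Connected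

/-- A cable path: a path whose internal vertices are adjacent exactly to their
two neighbours on the path. -/
def IsCablePath {V : Type u} (G : SimpleGraph V) (l : List V) : Prop :=
  l ≠ [] ∧ l.Nodup ∧ l.Chain' G.Adj ∧
  ∀ (i : ℕ) (h2 : i + 1 < l.length) (_h1 : 1 ≤ i) (y : V),
    G.Adj (l.get ⟨i, by omega⟩) y ↔
      (y = l.get ⟨i - 1, by omega⟩ ∨ y = l.get ⟨i + 1, h2⟩)

/-- `G` is contractible to `H` via `ψ`: preimages are connected witness sets and
`H`-adjacency corresponds to existence of crossing edges of `G`. -/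
def IsContraction {V : Type u} {W : Type v} (G : SimpleGraph V) (H : SimpleGraph W)
    (ψ : V → W) : Prop :=
  Function.Surjective ψ ∧
  (∀ t : W, (G.induce (ψ ⁻¹' {t})).Connected) ∧
  (∀ t t' : W, H.Adj t t' ↔ t ≠ t' ∧ ∃ x y : V, G.Adj x y ∧ ψ x = t ∧ ψ y = t')

/-- The witness set of `t` is big: it contains at least two vertices. -/
def BigWitness {V : Type u} {W : Type v} (ψ : V → W) (t : W) : Prop :=
  ∃ a b : V, a ≠ b ∧ ψ a = t ∧ ψ b = t

/-- A 3-colouring `f` of `V(G)` is compatible with the `T`-witness structure given by `ψ`: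
witness sets are monochromatic, adjacent big witness sets get distinct colours, and
endpoints of cable paths in `T` between two big witness sets through singleton witness
sets are coloured differently from their path-neighbours. -/
def Compatible {V : Type u} {W : Type v} (T : SimpleGraph W) (ψ : V → W)
    (f : V → Fin 3) : Prop :=
  (∀ x y : V, ψ x = ψ y → f x = f y) ∧
  (∀ t t' : W, BigWitness ψ t → BigWitness ψ t' → T.Adj t t' →
    ∀ x y : V, ψ x = t → ψ y = t' → f x ≠ f y) ∧
  (∀ l : List W, IsCablePath T l → ∀ (hlen : 3 ≤ l.length),
    BigWitness ψ (l.get ⟨0, by omega⟩) →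
    BigWitness ψ (l.get ⟨l.length - 1, by omega⟩) →
    (∀ (i : ℕ) (h : i < l.length), 1 ≤ i → i < l.length - 1 →
      ¬ BigWitness ψ (l.get ⟨i, h⟩)) →
    ((∀ x y : V, ψ x = l.get ⟨0, by omega⟩ → ψ y = l.get ⟨1, by omega⟩ → f x ≠ f y) ∧
     (∀ x y : V, ψ x = l.get ⟨l.length - 1, by omega⟩ →
        ψ y = l.get ⟨l.length - 2, by omega⟩ → f x ≠ f y)))

/-- The graph `G - Z`, seen as a graph on all of `V`: edges of `G` avoiding `Z`. -/
def restrictOutside {V : Type u} (G : SimpleGraph V) (Z : Set V) : SimpleGraph V where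
  Adj x y := G.Adj x y ∧ x ∉ Z ∧ y ∉ Z
  symm := by refine ⟨?_⟩; rintro x y ⟨h, hx, hy⟩; exact ⟨h.symm, hy, hx⟩
  loopless := by refine ⟨?_⟩; rintro x ⟨h, -, -⟩; exact G.ne_of_adj h rfl

/-- `Z` is a core of `G`: every connected component of `G - Z` is an isolated vertex
or (the vertex set of) a cable path of `G`. -/
def IsCore {V : Type u} (G : SimpleGraph V) (Z : Set V) : Prop :=
  ∀ x ∉ Z, {u | (restrictOutside G Z).Reachable x u} = {x} ∨
    ∃ l : List V, IsCablePath G l ∧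
      {u | (restrictOutside G Z).Reachable x u} = {u | u ∈ l}

/-- A connected core. -/
def IsConnectedCore {V : Type u} (G : SimpleGraph V) (Z : Set V) : Prop :=
  (G.induce Z).Connected ∧ IsCore G Z

/-- `B` induces a nonempty connected subgraph without cut-vertices. -/
def NoCutVertexSet {V : Type u} (G : SimpleGraph V) (B : Set V) : Prop :=
  B.Nonempty ∧ (G.induce B).Connected ∧
  ∀ x ∈ B, (B \ {x}).Nonempty → (G.induce (B \ {x})).Connected

/-- A block of `G`: a maximal set inducing a connected subgraph without cut-vertices. -/
def IsBlock {V : Type u} (G : SimpleGraph V) (B : Set V) : Prop :=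
  NoCutVertexSet G B ∧ ∀ B' : Set V, B ⊆ B' → NoCutVertexSet G B' → B = B'

/-- `B` is the vertex set of an induced cycle of `G`. -/
def IsCycleSet {V : Type u} (G : SimpleGraph V) (B : Set V) : Prop :=
  ∃ (a : V) (c : G.Walk a a), c.IsCycle ∧ {x | x ∈ c.support} = B ∧
    ∀ x ∈ B, ∀ y ∈ B, G.Adj x y → s(x, y) ∈ c.edges

/-- `G` can be turned into a cactus by contracting at most `k` edges. -/
def KContractibleToCactus {V : Type u} (G : SimpleGraph V) (k : ℕ) : Prop :=
  ∃ F : Set (Sym2 V), F ⊆ G.edgeSet ∧ F.ncard ≤ k ∧ IsCactus (contract G F)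

/-- `G` has a tree decomposition of width at most `w`. -/
def HasTreewidthAtMost {V : Type u} (G : SimpleGraph V) (w : ℕ) : Prop :=
  ∃ (ι : Type u) (T : SimpleGraph ι) (β : ι → Set V),
    T.Connected ∧ T.IsAcyclic ∧
    (∀ x : V, ∃ i, x ∈ β i) ∧
    (∀ ⦃x y : V⦄, G.Adj x y → ∃ i, x ∈ β i ∧ y ∈ β i) ∧
    (∀ (x : V) (i j : ι), x ∈ β i → x ∈ β j →
      ∀ p : T.Walk i j, p.IsPath → ∀ z ∈ p.support, x ∈ β z) ∧
    (∀ i, (β i).ncard ≤ w + 1)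

namespace StmtAux

variable {V : Type u} {G : SimpleGraph V}

lemma edge_mem_of_lt {u v : V} (w : G.Walk u v) {i : ℕ} (hi : i < w.length) :
    s(w.getVert i, w.getVert (i+1)) ∈ w.edges := by
  rw [← SimpleGraph.Walk.mem_edges_toSubgraph]
  exact (w.toSubgraph_adj_getVert hi)

lemma mem_edge_iff {u v : V} (w : G.Walk u v) {e : Sym2 V} (he : e ∈ w.edges) :
    ∃ i, i < w.length ∧ e = s(w.getVert i, w.getVert (i+1)) := by
  induction e with
  | _ x y =>
    have : w.toSubgraph.Adj x y := by
      rw [← SimpleGraph.Subgraph.mem_edgeSet, SimpleGraph.Walk.mem_edges_toSubgraph]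
      exact he
    obtain ⟨i, h1, h2⟩ := (w.toSubgraph_adj_iff).mp this
    exact ⟨i, h2, h1.symm⟩

lemma getVert_eq_support_get {u v : V} (w : G.Walk u v) (i : ℕ)
    (h : i < w.support.length) : w.getVert i = w.support.get ⟨i, h⟩ := by
  induction w generalizing i with
  | nil =>
    simp only [SimpleGraph.Walk.support_nil, List.length_cons, List.length_nil] at h
    interval_cases i <;> simp [SimpleGraph.Walk.getVert]
  | cons hadj p ih =>
    cases i with
    | zero => simp [SimpleGraph.Walk.getVert]
    | succ n =>
      simp only [SimpleGraph.Walk.support_cons, List.get_cons_succ]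
      rw [SimpleGraph.Walk.getVert_cons_succ]
      apply ih

lemma cycle_getVert_inj {a : V} {c : G.Walk a a} (hc : c.IsCycle) {i j : ℕ}
    (hi : i < c.length) (hj : j < c.length) (h : c.getVert i = c.getVert j) : i = j := by
  have hlen : c.support.length = c.length + 1 := c.length_support
  have htail : c.support.tail.Nodup := hc.support_nodup
  have htl : c.support.tail.length = c.length := by
    rw [List.length_tail, hlen]; omega
  -- getVert k for 1 ≤ k ≤ length equals tail.get (k-1)
  have key : ∀ k, 1 ≤ k → k ≤ c.length → ∀ (hk : k - 1 < c.support.tail.length),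
      c.getVert k = c.support.tail.get ⟨k - 1, hk⟩ := by
    intro k hk1 hk2 hk
    rw [getVert_eq_support_get c k (by omega), List.get_tail c.support (k-1) hk]
    congr 1
    simp only [Fin.mk.injEq]
    omega
  by_contra hne
  -- wlog both nonzero handled via: if i=0 then getVert j = a
  rcases Nat.eq_zero_or_pos i with rfl | hi1 <;> rcases Nat.eq_zero_or_pos j with rfl | hj1
  · exact hne rfl
  · -- i = 0 : getVert j = a; also getVert length = a; j < length
    have h0 : c.getVert 0 = a := c.getVert_zero
    have hL : c.getVert c.length = a := c.getVert_length
    have h1 : c.getVert j = c.support.tail.get ⟨j - 1, by omega⟩ := key j hj1 (by omega) _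
    have h2 : c.getVert c.length = c.support.tail.get ⟨c.length - 1, by omega⟩ :=
      key c.length (by have := hc.three_le_length; omega) le_rfl _
    have : c.support.tail.get ⟨j - 1, by omega⟩ = c.support.tail.get ⟨c.length - 1, by omega⟩ := by
      rw [← h1, ← h2, ← h, h0, hL]
    have := (List.Nodup.get_inj_iff htail).mp this
    simp only [Fin.mk.injEq] at this
    omega
  · have h0 : c.getVert 0 = a := c.getVert_zero
    have hL : c.getVert c.length = a := c.getVert_length
    have h1 : c.getVert i = c.support.tail.get ⟨i - 1, by omega⟩ := key i hi1 (by omega) _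
    have h2 : c.getVert c.length = c.support.tail.get ⟨c.length - 1, by omega⟩ :=
      key c.length (by have := hc.three_le_length; omega) le_rfl _
    have : c.support.tail.get ⟨i - 1, by omega⟩ = c.support.tail.get ⟨c.length - 1, by omega⟩ := by
      rw [← h1, ← h2, h, h0, hL]
    have := (List.Nodup.get_inj_iff htail).mp this
    simp only [Fin.mk.injEq] at this
    omega
  · have h1 : c.getVert i = c.support.tail.get ⟨i - 1, by omega⟩ := key i hi1 (by omega) _
    have h2 : c.getVert j = c.support.tail.get ⟨j - 1, by omega⟩ := key j hj1 (by omega) _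
    have : c.support.tail.get ⟨i - 1, by omega⟩ = c.support.tail.get ⟨j - 1, by omega⟩ := by
      rw [← h1, ← h2, h]
    have := (List.Nodup.get_inj_iff htail).mp this
    simp only [Fin.mk.injEq] at this
    omega


/-- every support vertex of a cycle has two distinct neighbours along the cycle. -/
lemma cycle_two_nbrs {a : V} {c : G.Walk a a} (hc : c.IsCycle) {x : V}
    (hx : x ∈ c.support) :
    ∃ y z : V, y ≠ z ∧ s(x, y) ∈ c.edges ∧ s(x, z) ∈ c.edges := by
  classical
  set c' := c.rotate x hx with hc'def
  have hc' : c'.IsCycle := hc.rotate hx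
  have hmem : ∀ e, e ∈ c'.edges ↔ e ∈ c.edges := fun e => (c.rotate_edges x hx).mem_iff
  have hm3 : 3 ≤ c'.length := hc'.three_le_length
  refine ⟨c'.getVert 1, c'.getVert (c'.length - 1), ?_, ?_, ?_⟩
  · intro h
    have := cycle_getVert_inj hc' (i := 1) (j := c'.length - 1) (by omega) (by omega) h
    omega
  · have h0 := edge_mem_of_lt c' (i := 0) (by omega)
    rw [c'.getVert_zero] at h0
    exact (hmem _).mp h0
  · have h0 := edge_mem_of_lt c' (i := c'.length - 1) (by omega)
    have he : c'.getVert (c'.length - 1 + 1) = x := by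
      have : c'.length - 1 + 1 = c'.length := by omega
      rw [this, c'.getVert_length]
    rw [he] at h0
    rw [Sym2.eq_swap]
    exact (hmem _).mp h0

/-- Vertex of degree at least three. -/
def DegGe3 (G : SimpleGraph V) (x : V) : Prop :=
  ∃ y₁ y₂ y₃ : V, y₁ ≠ y₂ ∧ y₁ ≠ y₃ ∧ y₂ ≠ y₃ ∧ G.Adj x y₁ ∧ G.Adj x y₂ ∧ G.Adj x y₃

lemma first_transition (p : ℕ → Prop) {a b : ℕ} (hab : a < b) (ha : p a) (hb : ¬ p b) :
    ∃ k, a ≤ k ∧ k < b ∧ p k ∧ ¬ p (k + 1) := by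
  classical
  have hex : ∃ x, x ≤ b ∧ a < x ∧ ¬ p x := ⟨b, le_rfl, hab, hb⟩
  set k0 := Nat.find hex with hk0
  obtain ⟨h1, h2, h3⟩ := Nat.find_spec hex
  have hk0pos : 1 ≤ k0 := by omega
  refine ⟨k0 - 1, by omega, by omega, ?_, by
    have : k0 - 1 + 1 = k0 := by omega
    rw [this]; exact h3⟩
  by_cases hk : k0 - 1 = a
  · rwa [hk]
  · by_contra hpk
    exact Nat.find_min hex (m := k0 - 1) (by omega) ⟨by omega, by omega, hpk⟩

lemma mod_ne_of_between {m k₁ k₂ : ℕ} (h1 : k₁ < k₂) (h2 : k₂ < k₁ + m) :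
    (k₁ + 1) % m ≠ (k₂ + 1) % m := by
  intro h
  have hm : 0 < m := by omega
  have hmod : (k₁ + 1) % m = (k₂ + 1) % m := h
  have hdvd : m ∣ (k₂ + 1) - (k₁ + 1) := (Nat.modEq_iff_dvd' (by omega)).mp hmod
  have hlt : (k₂ + 1) - (k₁ + 1) < m := by omega
  have hpos : 0 < (k₂ + 1) - (k₁ + 1) := by omega
  exact absurd (Nat.le_of_dvd hpos hdvd) (by omega)

lemma pigeon4 {β : Type v} (f : Fin 4 → β) (w w' : β)
    (h : ∃ i j k : Fin 4, i ≠ j ∧ i ≠ k ∧ j ≠ k ∧ f i = w ∧ f j = w ∧ f k = w)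
    (h' : ∃ i j k : Fin 4, i ≠ j ∧ i ≠ k ∧ j ≠ k ∧ f i = w' ∧ f j = w' ∧ f k = w') :
    w = w' := by
  classical
  obtain ⟨i, j, k, hij, hik, hjk, hi, hj, hk⟩ := h
  obtain ⟨i', j', k', hij', hik', hjk', hi', hj', hk'⟩ := h'
  by_contra hne
  have hS : ({i, j, k} : Finset (Fin 4)).card = 3 :=
    Finset.card_eq_three.mpr ⟨i, j, k, hij, hik, hjk, rfl⟩
  have hT : ({i', j', k'} : Finset (Fin 4)).card = 3 :=
    Finset.card_eq_three.mpr ⟨i', j', k', hij', hik', hjk', rfl⟩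
  have hdisj : Disjoint ({i, j, k} : Finset (Fin 4)) {i', j', k'} := by
    rw [Finset.disjoint_left]
    intro x hx hx'
    have hxw : f x = w := by
      simp only [Finset.mem_insert, Finset.mem_singleton] at hx
      rcases hx with rfl | rfl | rfl <;> assumption
    have hxw' : f x = w' := by
      simp only [Finset.mem_insert, Finset.mem_singleton] at hx'
      rcases hx' with rfl | rfl | rfl <;> assumption
    exact hne (hxw.symm.trans hxw')
  have := Finset.card_union_of_disjoint hdisj
  have hle := Finset.card_le_univ (({i, j, k} : Finset (Fin 4)) ∪ {i', j', k'})
  simp only [this, hS, hT, Fintype.card_fin] at hle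
  omega


/-- In a graph with at most one vertex of degree ≥ 3, the edges of a cycle sharing an
edge with another cycle are all contained in the latter cycle. -/
lemma cycle_edges_subset_of_shared {H : SimpleGraph V}
    (hdeg : ∀ x y : V, DegGe3 H x → DegGe3 H y → x = y)
    {a b : V} {c1 : H.Walk a a} {c2 : H.Walk b b} (h1 : c1.IsCycle) (h2 : c2.IsCycle)
    {e : Sym2 V} (he1 : e ∈ c1.edges) (he2 : e ∈ c2.edges) :
    ∀ f ∈ c1.edges, f ∈ c2.edges := by
  by_contra hcon
  push_neg at hcon
  obtain ⟨f, hf1, hf2⟩ := hcon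
  set m := c1.length with hm
  have hm3 : 3 ≤ m := h1.three_le_length
  set p : ℕ → Prop := fun k => s(c1.getVert (k % m), c1.getVert (k % m + 1)) ∈ c2.edges
    with hp
  obtain ⟨i, him, hie⟩ := mem_edge_iff c1 he1
  obtain ⟨j, hjm, hjf⟩ := mem_edge_iff c1 hf1
  have hpi : p i := by simp only [hp, Nat.mod_eq_of_lt (show i < m from him)]; rw [← hie]; exact he2
  have hpj : ¬ p j := by simp only [hp, Nat.mod_eq_of_lt (show j < m from hjm)]; rw [← hjf]; exact hf2
  have hper : ∀ k, p (k + m) = p k := by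
    intro k; simp only [hp, Nat.add_mod_right]
  have hshared : ∀ k, c1.getVert (k % m + 1) = c1.getVert ((k + 1) % m) := by
    intro k
    have h1m : (k + 1) % m = (k % m + 1) % m := by
      rw [Nat.add_mod, Nat.mod_eq_of_lt (show (1:ℕ) < m by omega)]
    have hkm : k % m < m := Nat.mod_lt _ (by omega)
    rcases Nat.lt_or_ge (k % m + 1) m with h | h
    · rw [h1m, Nat.mod_eq_of_lt h]
    · have hkm1 : k % m + 1 = m := by omega
      rw [hkm1, hm, c1.getVert_length, h1m, hkm1, Nat.mod_self, c1.getVert_zero]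
  have htrans : ∀ k, (p k ∧ ¬ p (k + 1)) ∨ (¬ p k ∧ p (k + 1)) →
      DegGe3 H (c1.getVert ((k + 1) % m)) := by
    intro k hk
    set v := c1.getVert ((k + 1) % m) with hv
    have he₁m : s(c1.getVert (k % m), c1.getVert (k % m + 1)) ∈ c1.edges :=
      edge_mem_of_lt c1 (Nat.mod_lt _ (by omega))
    have he₂m : s(c1.getVert ((k+1) % m), c1.getVert ((k+1) % m + 1)) ∈ c1.edges :=
      edge_mem_of_lt c1 (Nat.mod_lt _ (by omega))
    have he₁v : s(c1.getVert (k % m), c1.getVert (k % m + 1))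
        = s(c1.getVert (k % m), v) := by rw [hv, hshared k]
    have hvs : v ∈ c2.support ∧ ∃ u, H.Adj v u ∧ s(v, u) ∉ c2.edges := by
      rcases hk with ⟨hpk, hpk1⟩ | ⟨hpk, hpk1⟩
      · constructor
        · have hc2 : s(c1.getVert (k % m), v) ∈ c2.edges := by rw [← he₁v]; exact hpk
          exact c2.snd_mem_support_of_mem_edges hc2
        · refine ⟨c1.getVert ((k+1) % m + 1), ?_, ?_⟩
          · exact c1.adj_of_mem_edges he₂m
          · exact hpk1
      · constructor
        · have hc2 : s(v, c1.getVert ((k+1) % m + 1)) ∈ c2.edges := hpk1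
          exact c2.fst_mem_support_of_mem_edges hc2
        · refine ⟨c1.getVert (k % m), ?_, ?_⟩
          · have := c1.adj_of_mem_edges (he₁v ▸ he₁m)
            exact this.symm
          · rw [Sym2.eq_swap, ← he₁v]
            exact hpk
    obtain ⟨hvsup, u, hadj, hout⟩ := hvs
    obtain ⟨y, z, hyz, hy, hz⟩ := cycle_two_nbrs h2 hvsup
    refine ⟨u, y, z, ?_, ?_, hyz, hadj, c2.adj_of_mem_edges hy, c2.adj_of_mem_edges hz⟩
    · rintro rfl; exact hout hy
    · rintro rfl; exact hout hz
  have hmain : ∀ k₁ k₂ : ℕ, k₁ < k₂ → k₂ < k₁ + m →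
      ((p k₁ ∧ ¬ p (k₁ + 1)) ∨ (¬ p k₁ ∧ p (k₁ + 1))) →
      ((p k₂ ∧ ¬ p (k₂ + 1)) ∨ (¬ p k₂ ∧ p (k₂ + 1))) → False := by
    intro k₁ k₂ hlt hltm ht1 ht2
    have d1 := htrans k₁ ht1
    have d2 := htrans k₂ ht2
    have heq := hdeg _ _ d1 d2
    have := cycle_getVert_inj h1 (i := (k₁ + 1) % m) (j := (k₂ + 1) % m)
      (Nat.mod_lt _ (by omega)) (Nat.mod_lt _ (by omega)) heq
    exact mod_ne_of_between hlt hltm this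
  rcases Nat.lt_or_ge i j with hlt | hge
  · obtain ⟨k₁, hk₁a, hk₁b, hk₁p, hk₁q⟩ := first_transition p hlt hpi hpj
    have hpim : p (i + m) := by rw [hper]; exact hpi
    obtain ⟨k₂, hk₂a, hk₂b, hk₂p, hk₂q⟩ :=
      first_transition (fun x => ¬ p x) (show j < i + m by omega) hpj (not_not_intro hpim)
    exact hmain k₁ k₂ (by omega) (by omega) (Or.inl ⟨hk₁p, hk₁q⟩)
      (Or.inr ⟨hk₂p, not_not.mp hk₂q⟩)
  · have hij : i ≠ j := fun h => hpj (h ▸ hpi)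
    have hgt : j < i := by omega
    obtain ⟨k₁, hk₁a, hk₁b, hk₁p, hk₁q⟩ :=
      first_transition (fun x => ¬ p x) hgt hpj (not_not_intro hpi)
    have hpjm : ¬ p (j + m) := by rw [hper]; exact hpj
    obtain ⟨k₂, hk₂a, hk₂b, hk₂p, hk₂q⟩ :=
      first_transition p (show i < j + m by omega) hpi hpjm
    exact hmain k₁ k₂ (by omega) (by omega) (Or.inr ⟨hk₁p, not_not.mp hk₁q⟩)
      (Or.inl ⟨hk₂p, hk₂q⟩)


lemma contract_reachable (G : SimpleGraph V) (F : Set (Sym2 V)) {x y : V}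
    (h : G.Reachable x y) :
    (contract G F).Reachable ((SimpleGraph.fromEdgeSet F ⊓ G).connectedComponentMk x)
      ((SimpleGraph.fromEdgeSet F ⊓ G).connectedComponentMk y) := by
  obtain ⟨w⟩ := h
  induction w with
  | nil => exact Reachable.refl _
  | @cons x' z y' h p ih =>
    refine Reachable.trans ?_ ih
    by_cases hc : (SimpleGraph.fromEdgeSet F ⊓ G).connectedComponentMk x' =
        (SimpleGraph.fromEdgeSet F ⊓ G).connectedComponentMk z
    · rw [hc]
    · exact SimpleGraph.Adj.reachable ⟨hc, x', z, h, rfl, rfl⟩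

lemma contract_connected (G : SimpleGraph V) (F : Set (Sym2 V)) (hG : G.Connected) :
    (contract G F).Connected := by
  have hne : Nonempty V := hG.nonempty
  have hpre : (contract G F).Preconnected := by
    intro c d
    obtain ⟨x, rfl⟩ := c.exists_rep
    obtain ⟨y, rfl⟩ := d.exists_rep
    exact contract_reachable G F (hG.preconnected x y)
  have : Nonempty (SimpleGraph.fromEdgeSet F ⊓ G).ConnectedComponent :=
    ⟨(SimpleGraph.fromEdgeSet F ⊓ G).connectedComponentMk Classical.ofNonempty⟩
  exact Connected.mk hpre

lemma spanning_forest (G : SimpleGraph V) (s : Set V) (hs : s.Finite) :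
    ∃ F : Set (Sym2 V), F ⊆ G.edgeSet ∧ (∀ e ∈ F, ∀ x ∈ e, x ∈ s) ∧
      F.ncard + 1 ≤ max 1 s.ncard ∧
      ∀ u v, u ∈ s → v ∈ s → G.Adj u v →
        (SimpleGraph.fromEdgeSet F ⊓ G).Reachable u v := by
  classical
  set R : Set (Sym2 V) → V → V → Prop :=
    fun F u v => (SimpleGraph.fromEdgeSet F ⊓ G).Reachable u v with hR
  set cls : Set (Sym2 V) → V → Set V := fun F u => {v ∈ s | R F u v} with hcls
  set CL : Set (Sym2 V) → Set (Set V) := fun F => cls F '' s with hCL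
  have hCLfin : ∀ F, (CL F).Finite := fun F => hs.image _
  have hCLle : ∀ F, (CL F).ncard ≤ s.ncard := fun F => Set.ncard_image_le hs
  have hRmono : ∀ (F F' : Set (Sym2 V)), F ⊆ F' → ∀ x y, R F x y → R F' x y := by
    intro F F' hsub x y hxy
    exact hxy.mono (inf_le_inf_right G (SimpleGraph.fromEdgeSet_mono hsub))
  have hRsymm : ∀ F x y, R F x y → R F y x := fun F x y h => h.symm
  have hRtrans : ∀ F x y z, R F x y → R F y z → R F x z := fun F x y z h h' => h.trans h'
  have hclscongr : ∀ F x y, R F x y → cls F x = cls F y := by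
    intro F x y hxy
    ext w
    simp only [hcls, Set.mem_setOf_eq]
    exact ⟨fun ⟨hw, hr⟩ => ⟨hw, hRtrans _ _ _ _ (hRsymm _ _ _ hxy) hr⟩,
      fun ⟨hw, hr⟩ => ⟨hw, hRtrans _ _ _ _ hxy hr⟩⟩
  suffices h : ∀ n (F : Set (Sym2 V)), F ⊆ G.edgeSet → (∀ e ∈ F, ∀ x ∈ e, x ∈ s) →
      F.ncard + (CL F).ncard ≤ s.ncard → (CL F).ncard ≤ n →
      ∃ F' : Set (Sym2 V), F' ⊆ G.edgeSet ∧ (∀ e ∈ F', ∀ x ∈ e, x ∈ s) ∧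
        F'.ncard + 1 ≤ max 1 s.ncard ∧
        ∀ u v, u ∈ s → v ∈ s → G.Adj u v → R F' u v by
    refine h (CL ∅).ncard ∅ (by simp) (by simp) ?_ le_rfl
    rw [Set.ncard_empty]
    simpa using hCLle ∅
  intro n
  induction n using Nat.strong_induction_on with
  | _ n ih =>
    intro F hFsub hFin hbud hn
    by_cases hdone : ∀ u v, u ∈ s → v ∈ s → G.Adj u v → R F u v
    · refine ⟨F, hFsub, hFin, ?_, hdone⟩
      rcases s.eq_empty_or_nonempty with rfl | hne
      · have : F.ncard = 0 := by
          have := hCLle F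
          simp only [Set.ncard_empty] at hbud this ⊢
          omega
        rw [this]
        exact le_max_left _ _
      · obtain ⟨w, hw⟩ := hne
        have hclmem : cls F w ∈ CL F := ⟨w, hw, rfl⟩
        have h1 : 1 ≤ (CL F).ncard := (Set.ncard_pos (hCLfin F)).mpr ⟨_, hclmem⟩
        have h2 : s.ncard ≤ max 1 s.ncard := le_max_right _ _
        omega
    · push_neg at hdone
      obtain ⟨u, v, hu, hv, hadj, hnr⟩ := hdone
      set F₂ := insert s(u,v) F with hF₂
      have hF₂sub : F₂ ⊆ G.edgeSet := by
        rw [hF₂, Set.insert_subset_iff]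
        exact ⟨G.mem_edgeSet.mpr hadj, hFsub⟩
      have hF₂in : ∀ e ∈ F₂, ∀ x ∈ e, x ∈ s := by
        intro e he x hx
        rcases he with rfl | he
        · rcases Sym2.mem_iff.mp hx with rfl | rfl
          · exact hu
          · exact hv
        · exact hFin e he x hx
      have hsub2 : F ⊆ F₂ := Set.subset_insert _ _
      have hRuv : R F₂ u v := by
        refine SimpleGraph.Adj.reachable ?_
        refine ⟨?_, hadj⟩
        rw [SimpleGraph.fromEdgeSet_adj]
        exact ⟨Set.mem_insert _ _, hadj.ne⟩
      -- class count drops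
      set φ : Set V → Set V := fun S => ⋃ x ∈ S, cls F₂ x with hφ
      have hphi : ∀ x, x ∈ s → φ (cls F x) = cls F₂ x := by
        intro x hx
        ext w
        simp only [hφ, Set.mem_iUnion, exists_prop]
        constructor
        · rintro ⟨y, ⟨hy, hry⟩, hw⟩
          have : R F₂ x y := hRmono F F₂ hsub2 _ _ hry
          rw [← hclscongr F₂ x y this] at hw
          exact hw
        · intro hw
          exact ⟨x, ⟨hx, Reachable.refl _⟩, hw⟩
      have hsurj : CL F₂ ⊆ φ '' (CL F \ {cls F v}) := by
        rintro T ⟨x, hx, rfl⟩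
        by_cases hc : cls F x = cls F v
        · have hxv : R F v x := by
            have : x ∈ cls F x := ⟨hx, Reachable.refl _⟩
            rw [hc] at this
            exact this.2
          have h1 : cls F₂ x = cls F₂ u := by
            refine (hclscongr F₂ u x ?_).symm
            exact hRtrans _ _ _ _ hRuv (hRmono F F₂ hsub2 _ _ hxv)
          have h2 : cls F u ≠ cls F v := by
            intro h
            apply hnr
            have : v ∈ cls F u := by rw [h]; exact ⟨hv, Reachable.refl _⟩
            exact this.2
          exact ⟨cls F u, ⟨⟨u, hu, rfl⟩, h2⟩, by rw [hphi u hu, ← h1]⟩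
        · exact ⟨cls F x, ⟨⟨x, hx, rfl⟩, hc⟩, hphi x hx⟩
      have hdrop : (CL F₂).ncard ≤ (CL F).ncard - 1 := by
        have h1 : (CL F₂).ncard ≤ (φ '' (CL F \ {cls F v})).ncard :=
          Set.ncard_le_ncard hsurj (((hCLfin F).diff).image _)
        have h2 : (φ '' (CL F \ {cls F v})).ncard ≤ (CL F \ {cls F v}).ncard :=
          Set.ncard_image_le ((hCLfin F).diff)
        have h3 : (CL F \ {cls F v}).ncard = (CL F).ncard - 1 :=
          Set.ncard_diff_singleton_of_mem (s := CL F) ⟨v, hv, rfl⟩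
        omega
      have hclpos : 1 ≤ (CL F).ncard :=
        (Set.ncard_pos (hCLfin F)).mpr ⟨_, ⟨v, hv, rfl⟩⟩
      have hF₂card : F₂.ncard ≤ F.ncard + 1 := Set.ncard_insert_le _ _
      exact ih (CL F₂).ncard (by omega) F₂ hF₂sub hF₂in (by omega) le_rfl


end StmtAux

/-- A 2-connected graph whose vertex set is partitioned into two cable paths can be
turned into a cactus by contracting at most 3 edges. -/
theorem stmt9 {V : Type u} (G : SimpleGraph V) (hG : TwoConnected G)
    (P Q : List V) (hP : IsCablePath G P) (hQ : IsCablePath G Q)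
    (hpart : ∀ x : V, x ∈ P ↔ x ∉ Q) :
    KContractibleToCactus G 3 := by
  classical
  obtain ⟨hGconn, hcard, -⟩ := hG
  have hP0 : 0 < P.length := List.length_pos_iff.mpr hP.1
  have hQ0 : 0 < Q.length := List.length_pos_iff.mpr hQ.1
  set p0 := P.get ⟨0, hP0⟩ with hp0
  set p1 := P.get ⟨P.length - 1, by omega⟩ with hp1
  set q0 := Q.get ⟨0, hQ0⟩ with hq0
  set q1 := Q.get ⟨Q.length - 1, by omega⟩ with hq1
  set A : Set V := {p0, p1, q0, q1} with hA
  have hAfin : A.Finite := Set.toFinite A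
  have hAcard : A.ncard ≤ 4 := by
    rw [hA]
    have h1 := Set.ncard_insert_le p0 ({p1, q0, q1} : Set V)
    have h2 := Set.ncard_insert_le p1 ({q0, q1} : Set V)
    have h3 := Set.ncard_insert_le q0 ({q1} : Set V)
    have h4 : ({q1} : Set V).ncard = 1 := Set.ncard_singleton q1
    omega
  obtain ⟨F, hFsub, hFin, hFcard, hFmerge⟩ := StmtAux.spanning_forest G A hAfin
  have hFcard3 : F.ncard ≤ 3 := by
    have h4 : F.ncard + 1 ≤ 4 := hFcard.trans (max_le (by norm_num) hAcard)
    omega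
  set π : V → (SimpleGraph.fromEdgeSet F ⊓ G).ConnectedComponent :=
    (SimpleGraph.fromEdgeSet F ⊓ G).connectedComponentMk with hπ
  -- non-A vertices are isolated in the contracted part
  have hsingle : ∀ x y : V, x ∉ A → π x = π y → x = y := by
    intro x y hx hpi
    have hr : (SimpleGraph.fromEdgeSet F ⊓ G).Reachable x y := (ConnectedComponent.eq).mp hpi
    obtain ⟨w⟩ := hr
    cases w with
    | nil => rfl
    | @cons _ z _ h p =>
      exfalso
      have hF : s(x, z) ∈ F := ((SimpleGraph.fromEdgeSet_adj F).mp h.1).1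
      exact hx (hFin _ hF x (Sym2.mem_mk_left x z))
  have hmerge : ∀ x y : V, x ∈ A → y ∈ A → G.Adj x y → π x = π y := by
    intro x y hx hy hadj
    exact ConnectedComponent.sound (hFmerge x y hx hy hadj)
  -- endpoint membership facts
  have hp0A : p0 ∈ A := by rw [hA]; exact Set.mem_insert _ _
  have hp1A : p1 ∈ A := by rw [hA]; right; exact Set.mem_insert _ _
  have hq0A : q0 ∈ A := by rw [hA]; right; right; exact Set.mem_insert _ _
  have hq1A : q1 ∈ A := by rw [hA]; right; right; right; rfl
  have hq0Q : q0 ∈ Q := List.get_mem Q ⟨0, hQ0⟩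
  have hq1Q : q1 ∈ Q := List.get_mem Q ⟨_, by omega⟩
  have hp0P : p0 ∈ P := List.get_mem P ⟨0, hP0⟩
  have hp1P : p1 ∈ P := List.get_mem P ⟨_, by omega⟩
  -- classification of edges from an endpoint to a non-endpoint vertex of a cable path
  have hclass : ∀ (l : List V), IsCablePath G l → ∀ (hl0 : 0 < l.length),
      l.get ⟨0, hl0⟩ ∈ A → l.get ⟨l.length - 1, by omega⟩ ∈ A →
      (∀ z, z ∈ l → z ∈ A → z = l.get ⟨0, hl0⟩ ∨ z = l.get ⟨l.length - 1, by omega⟩) →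
      ∀ u vv, vv ∈ l → vv ∉ A → u ∈ A → G.Adj u vv →
      ∃ (_h3 : 3 ≤ l.length),
        (u = l.get ⟨0, hl0⟩ ∧ vv = l.get ⟨1, by omega⟩) ∨
        (u = l.get ⟨l.length - 1, by omega⟩ ∧ vv = l.get ⟨l.length - 2, by omega⟩) := by
    intro l hl hl0 h0A hlastA hends u vv hvl hvA huA hadj
    obtain ⟨⟨i, hi⟩, hveq⟩ := List.mem_iff_get.mp hvl
    subst hveq
    have hnd := hl.2.1
    have hi0 : i ≠ 0 := by
      rintro rfl
      exact hvA h0A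
    have hilast : i ≠ l.length - 1 := by
      intro h
      apply hvA
      have heq : (⟨i, hi⟩ : Fin l.length) = ⟨l.length - 1, by omega⟩ := Fin.mk_eq_mk.mpr h
      rw [heq]; exact hlastA
    have h1a : 1 ≤ i := by omega
    have h2a : i + 1 < l.length := by omega
    have hcab := (hl.2.2.2 i h2a h1a u).mp hadj.symm
    rcases hcab with h | h
    · rcases hends u (by rw [h]; exact List.get_mem l ⟨_, by omega⟩) huA with h0 | h1
      · have hthis := (List.Nodup.get_inj_iff hnd).mp (h.symm.trans h0)
        rw [Fin.mk_eq_mk] at hthis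
        have h3 : 3 ≤ l.length := by omega
        refine ⟨h3, Or.inl ⟨h0, ?_⟩⟩
        congr 1
        exact Fin.mk_eq_mk.mpr (by omega)
      · exfalso
        have hthis := (List.Nodup.get_inj_iff hnd).mp (h.symm.trans h1)
        rw [Fin.mk_eq_mk] at hthis
        omega
    · rcases hends u (by rw [h]; exact List.get_mem l ⟨_, by omega⟩) huA with h0 | h1
      · exfalso
        have hthis := (List.Nodup.get_inj_iff hnd).mp (h.symm.trans h0)
        rw [Fin.mk_eq_mk] at hthis
        omega
      · have hthis := (List.Nodup.get_inj_iff hnd).mp (h.symm.trans h1)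
        rw [Fin.mk_eq_mk] at hthis
        have h3 : 3 ≤ l.length := by omega
        refine ⟨h3, Or.inr ⟨h1, ?_⟩⟩
        congr 1
        exact Fin.mk_eq_mk.mpr (by omega)
  -- hends for P and Q
  have hendsP : ∀ z, z ∈ P → z ∈ A → z = p0 ∨ z = p1 := by
    intro z hzP hzA
    rw [hA] at hzA
    rcases hzA with rfl | rfl | rfl | rfl
    · exact Or.inl rfl
    · exact Or.inr rfl
    · exact absurd hq0Q ((hpart _).mp hzP)
    · exact absurd hq1Q ((hpart _).mp hzP)
  have hendsQ : ∀ z, z ∈ Q → z ∈ A → z = q0 ∨ z = q1 := by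
    intro z hzQ hzA
    have hzP : z ∉ P := fun h => (hpart z).mp h hzQ
    rw [hA] at hzA
    rcases hzA with rfl | rfl | rfl | rfl
    · exact absurd hp0P hzP
    · exact absurd hp1P hzP
    · exact Or.inl rfl
    · exact Or.inr rfl
  -- every non-A vertex is internal on its cable path
  have hint : ∀ x, x ∉ A → ∃ (l : List V) (_hl : IsCablePath G l) (i : ℕ)
      (hi : i < l.length), x = l.get ⟨i, hi⟩ ∧ 1 ≤ i ∧ i + 1 < l.length := by
    intro x hxA
    by_cases hxQ : x ∈ Q
    · obtain ⟨⟨i, hi⟩, hx⟩ := List.mem_iff_get.mp hxQ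
      refine ⟨Q, hQ, i, hi, hx.symm, ?_, ?_⟩
      · rcases Nat.eq_zero_or_pos i with rfl | h
        · exact absurd (hx ▸ hq0A) hxA
        · exact h
      · have : i ≠ Q.length - 1 := by
          intro h
          apply hxA
          rw [← hx]
          have heq : (⟨i, hi⟩ : Fin Q.length) = ⟨Q.length - 1, by omega⟩ := Fin.mk_eq_mk.mpr h
          rw [heq]; exact hq1A
        omega
    · have hxP : x ∈ P := (hpart x).mpr hxQ
      obtain ⟨⟨i, hi⟩, hx⟩ := List.mem_iff_get.mp hxP
      refine ⟨P, hP, i, hi, hx.symm, ?_, ?_⟩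
      · rcases Nat.eq_zero_or_pos i with rfl | h
        · exact absurd (hx ▸ hp0A) hxA
        · exact h
      · have : i ≠ P.length - 1 := by
          intro h
          apply hxA
          rw [← hx]
          have heq : (⟨i, hi⟩ : Fin P.length) = ⟨P.length - 1, by omega⟩ := Fin.mk_eq_mk.mpr h
          rw [heq]; exact hp1A
        omega
  -- the four endpoint tokens
  set ep : Fin 4 → V := fun i => match i with
    | 0 => p0 | 1 => p1 | 2 => q0 | 3 => q1 with hep
  set nv : Fin 4 → (SimpleGraph.fromEdgeSet F ⊓ G).ConnectedComponent := fun i => match i with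
    | 0 => if h : 3 ≤ P.length then π (P.get ⟨1, by omega⟩) else π p0
    | 1 => if h : 3 ≤ P.length then π (P.get ⟨P.length - 2, by omega⟩) else π p0
    | 2 => if h : 3 ≤ Q.length then π (Q.get ⟨1, by omega⟩) else π p0
    | 3 => if h : 3 ≤ Q.length then π (Q.get ⟨Q.length - 2, by omega⟩) else π p0 with hnv
  -- neighbour classification in the contracted graph
  have hD2 : ∀ w b : (SimpleGraph.fromEdgeSet F ⊓ G).ConnectedComponent,
      (contract G F).Adj w b →
      (∃ x, x ∉ A ∧ π x = w) ∨ (∃ i : Fin 4, w = π (ep i) ∧ b = nv i) := by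
    rintro w b ⟨hne, u, vv, huv, hu, hv⟩
    by_cases huA : u ∈ A
    · by_cases hvA : vv ∈ A
      · exact absurd (hu ▸ hv ▸ hmerge u vv huA hvA huv : w = b) (fun h => hne h)
      · right
        by_cases hvQ : vv ∈ Q
        · obtain ⟨h3, hc⟩ := hclass Q hQ hQ0 hq0A hq1A hendsQ u vv hvQ hvA huA huv
          rcases hc with ⟨hu', hv'⟩ | ⟨hu', hv'⟩
          · refine ⟨2, ?_, ?_⟩
            · rw [← hu, hu']
            · rw [← hv, hv']
              show _ = if h : 3 ≤ Q.length then π (Q.get ⟨1, by omega⟩) else π p0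
              rw [dif_pos h3]
          · refine ⟨3, ?_, ?_⟩
            · rw [← hu, hu']
            · rw [← hv, hv']
              show _ = if h : 3 ≤ Q.length then π (Q.get ⟨Q.length - 2, by omega⟩) else π p0
              rw [dif_pos h3]
        · have hvP : vv ∈ P := (hpart vv).mpr hvQ
          obtain ⟨h3, hc⟩ := hclass P hP hP0 hp0A hp1A hendsP u vv hvP hvA huA huv
          rcases hc with ⟨hu', hv'⟩ | ⟨hu', hv'⟩
          · refine ⟨0, ?_, ?_⟩
            · rw [← hu, hu']
            · rw [← hv, hv']
              show _ = if h : 3 ≤ P.length then π (P.get ⟨1, by omega⟩) else π p0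
              rw [dif_pos h3]
          · refine ⟨1, ?_, ?_⟩
            · rw [← hu, hu']
            · rw [← hv, hv']
              show _ = if h : 3 ≤ P.length then π (P.get ⟨P.length - 2, by omega⟩) else π p0
              rw [dif_pos h3]
    · exact Or.inl ⟨u, huA, hu⟩
  -- internal vertices have degree at most two
  have hD1 : ∀ x, x ∉ A → ¬ StmtAux.DegGe3 (contract G F) (π x) := by
    intro x hxA hdeg3
    obtain ⟨b1, b2, b3, h12, h13, h23, ha1, ha2, ha3⟩ := hdeg3
    obtain ⟨l, hl, i, hi, hxl, h1a, h2a⟩ := hint x hxA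
    have hnb : ∀ b, (contract G F).Adj (π x) b →
        b = π (l.get ⟨i - 1, by omega⟩) ∨ b = π (l.get ⟨i + 1, by omega⟩) := by
      rintro b ⟨hne, u, vv, huv, hu, hv⟩
      have hux : x = u := hsingle x u hxA hu.symm
      subst hux
      have : G.Adj (l.get ⟨i, hi⟩) vv := hxl ▸ huv
      rcases (hl.2.2.2 i h2a h1a vv).mp this with h | h
      · left; rw [← hv, h]
      · right; rw [← hv, h]
    rcases hnb b1 ha1 with h1 | h1 <;> rcases hnb b2 ha2 with h2 | h2 <;>
      rcases hnb b3 ha3 with h3 | h3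
    · exact h12 (h1.trans h2.symm)
    · exact h12 (h1.trans h2.symm)
    · exact h13 (h1.trans h3.symm)
    · exact h23 (h2.trans h3.symm)
    · exact h23 (h2.trans h3.symm)
    · exact h13 (h1.trans h3.symm)
    · exact h12 (h1.trans h2.symm)
    · exact h12 (h1.trans h2.symm)
  -- at most one vertex of degree ≥ 3 in the contracted graph
  have hdeg : ∀ w w', StmtAux.DegGe3 (contract G F) w → StmtAux.DegGe3 (contract G F) w' →
      w = w' := by
    have key : ∀ w, StmtAux.DegGe3 (contract G F) w →
        ∃ i j k : Fin 4, i ≠ j ∧ i ≠ k ∧ j ≠ k ∧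
          (fun i => π (ep i)) i = w ∧ (fun i => π (ep i)) j = w ∧
          (fun i => π (ep i)) k = w := by
      intro w hw
      obtain ⟨b1, b2, b3, h12, h13, h23, ha1, ha2, ha3⟩ := hw
      have noleft : ¬ ∃ x, x ∉ A ∧ π x = w := by
        rintro ⟨x, hxA, rfl⟩
        exact hD1 x hxA ⟨b1, b2, b3, h12, h13, h23, ha1, ha2, ha3⟩
      rcases hD2 w b1 ha1 with g1 | ⟨i1, hw1, hb1⟩
      · exact absurd g1 noleft
      rcases hD2 w b2 ha2 with g2 | ⟨i2, hw2, hb2⟩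
      · exact absurd g2 noleft
      rcases hD2 w b3 ha3 with g3 | ⟨i3, hw3, hb3⟩
      · exact absurd g3 noleft
      refine ⟨i1, i2, i3, ?_, ?_, ?_, hw1.symm, hw2.symm, hw3.symm⟩
      · rintro rfl; exact h12 (hb1.trans hb2.symm)
      · rintro rfl; exact h13 (hb1.trans hb3.symm)
      · rintro rfl; exact h23 (hb2.trans hb3.symm)
    intro w w' hw hw'
    exact StmtAux.pigeon4 (fun i => π (ep i)) w w' (key w hw) (key w' hw')
  -- conclusion
  refine ⟨F, hFsub, hFcard3, StmtAux.contract_connected G F hGconn, ?_⟩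
  intro e a b c1 c2 hc1 hc2 he1 he2
  ext f
  simp only [Set.mem_setOf_eq]
  constructor
  · intro hf
    exact StmtAux.cycle_edges_subset_of_shared hdeg hc1 hc2 he1 he2 f hf
  · intro hf
    exact StmtAux.cycle_edges_subset_of_shared hdeg hc2 hc1 he2 he1 f hf
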